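/- For the revived-cluster posterior mean θ_post(σ) = (1/(τσΔt + σ/w) + n/σ)^{-1}·(θ'/(τσΔt + σ/w) + (Σ_i y_i)/σ) with fixed w > 0, τ ≥ 0, Δt ≥ 0, n ≥ 1, θ' ∈ R^d, the limit as σ → 0⁺ equals (θ'·γ + n·m)/(γ + n), where γ = (w^{-1} + Δt·τ)^{-1} and m = (Σ_i y_i)/n. -/

import Mathlib

open Filter Topology

/-- Low-variance limit of the revived-cluster posterior mean: with transition
noise ξ = τσ per time step, previous-estimate variance σ' = σ/w, Δt elapsed
time steps, and n new observations, the posterior mean converges as σ → 0⁺ to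
(θ'·γ + n·m)/(γ + n) with γ = (w⁻¹ + Δt·τ)⁻¹ and m the sample mean. -/
theorem revived_posterior_mean_limit {d n : ℕ} (hn : 1 ≤ n)
    (w τ Δt : ℝ) (hw : 0 < w) (hτ : 0 ≤ τ) (hΔt : 0 ≤ Δt)
    (θ' : EuclideanSpace ℝ (Fin d)) (y : Fin n → EuclideanSpace ℝ (Fin d)) :
    Tendsto (fun σ : ℝ =>
        ((τ * σ * Δt + σ / w)⁻¹ + (n : ℝ) / σ)⁻¹ •
          ((τ * σ * Δt + σ / w)⁻¹ • θ' + σ⁻¹ • ∑ i : Fin n, y i))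
      (𝓝[>] 0)
      (𝓝 (((w⁻¹ + Δt * τ)⁻¹ + (n : ℝ))⁻¹ •
        ((w⁻¹ + Δt * τ)⁻¹ • θ' +
          (n : ℝ) • ((n : ℝ)⁻¹ • ∑ i : Fin n, y i)))) := by
  have hn0 : (n : ℝ) ≠ 0 := by
    exact_mod_cast Nat.one_le_iff_ne_zero.mp hn
  have hc : (0:ℝ) < w⁻¹ + Δt * τ := by positivity
  have hc0 : (w⁻¹ + Δt * τ) ≠ 0 := hc.ne'
  have hcn : ((w⁻¹ + Δt * τ)⁻¹ + (n : ℝ)) ≠ 0 := by positivity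
  have key : ∀ σ : ℝ, σ ∈ Set.Ioi (0:ℝ) →
      ((τ * σ * Δt + σ / w)⁻¹ + (n : ℝ) / σ)⁻¹ •
          ((τ * σ * Δt + σ / w)⁻¹ • θ' + σ⁻¹ • ∑ i : Fin n, y i)
      = ((w⁻¹ + Δt * τ)⁻¹ + (n : ℝ))⁻¹ •
        ((w⁻¹ + Δt * τ)⁻¹ • θ' + (n : ℝ) • ((n : ℝ)⁻¹ • ∑ i : Fin n, y i)) := by
    intro σ hσ
    have hσ0 : σ ≠ 0 := (Set.mem_Ioi.mp hσ).ne'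
    have ha : τ * σ * Δt + σ / w = σ * (w⁻¹ + Δt * τ) := by
      field_simp; ring
    set c := w⁻¹ + Δt * τ with hcdef
    have hb : (σ * c)⁻¹ + (n : ℝ) / σ = σ⁻¹ * (c⁻¹ + n) := by
      rw [mul_inv, div_eq_mul_inv, mul_add]
      ring
    have h1 : ((σ * c)⁻¹ + (n : ℝ) / σ)⁻¹ * (σ * c)⁻¹ = (c⁻¹ + (n : ℝ))⁻¹ * c⁻¹ := by
      rw [hb, mul_inv, inv_inv, mul_inv]
      field_simp
    have h2 : ((σ * c)⁻¹ + (n : ℝ) / σ)⁻¹ * σ⁻¹ = (c⁻¹ + (n : ℝ))⁻¹ * (n : ℝ) * (n : ℝ)⁻¹ := by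
      rw [hb, mul_inv, inv_inv]
      field_simp
    rw [ha, smul_add, smul_add, smul_smul, smul_smul, smul_smul, smul_smul, h1, h2, smul_smul]
  exact Tendsto.congr'
    (by filter_upwards [self_mem_nhdsWithin] using fun σ hσ => (key σ hσ).symm)
    tendsto_const_nhds
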